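/- For positive integers n and c, as formal power series, ∑_{w ∈ S_n^c} t^{des(w)} / (1 − t)^{n+1} = ∑_{k ≥ 0} (ck + 1)^n t^k; that is, the descent polynomial of the coloured permutation group ℤ/cℤ ≀ S_n is the h*-polynomial of the cube [0, c]^n. -/

import Mathlib

/-- The 1-indexed letter sequence of a permutation word, with `w_0 := 0`. -/
def permLetter {n : ℕ} (σ : Equiv.Perm (Fin n)) : ℕ → ℕ := fun i =>
  if h : i - 1 < n ∧ 1 ≤ i then ((σ ⟨i - 1, h.1⟩ : Fin n) : ℕ) + 1 else 0

/-- The 1-indexed colour sequence, with `γ_0 := 0`. -/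
def wordColour {n c : ℕ} (γ : Fin n → Fin c) : ℕ → ℕ := fun i =>
  if h : i - 1 < n ∧ 1 ≤ i then ((γ ⟨i - 1, h.1⟩ : Fin c) : ℕ) else 0

/-- The descent set of a coloured permutation with letter sequence `v` and colour
sequence `g` (with `v 0 = g 0 = 0`, i.e. `w_0^{γ_0} = 0^0`): position
`i ∈ {0,…,n-1}` is a descent iff `γ_i = γ_{i+1} = 0 ∧ w_i > w_{i+1}`, or
`γ_i = γ_{i+1} > 0 ∧ w_i ≥ w_{i+1}`, or `γ_i < γ_{i+1}`. -/
def colouredDesSet (n : ℕ) (v g : ℕ → ℕ) : Finset ℕ :=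
  (Finset.range n).filter (fun i =>
    (g i = 0 ∧ g (i + 1) = 0 ∧ v (i + 1) < v i) ∨
    (g i = g (i + 1) ∧ 0 < g i ∧ v (i + 1) ≤ v i) ∨
    g i < g (i + 1))



namespace CPaux
open Finset

/-- colour of a value: `(c - x % c) % c`. -/
def col (c x : ℕ) : ℕ := (c - x % c) % c
/-- level of a value: `⌈x/c⌉`. -/
def lam (c x : ℕ) : ℕ := (x + c - 1) / c

lemma col_lt {c : ℕ} (hc : 0 < c) (x : ℕ) : col c x < c := Nat.mod_lt _ hc

lemma lam_col {c : ℕ} (hc : 0 < c) (x : ℕ) : c * lam c x = x + col c x := by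
  obtain ⟨q, r, hrc, rfl⟩ : ∃ q r, r < c ∧ x = c * q + r :=
    ⟨x / c, x % c, Nat.mod_lt _ hc, (Nat.div_add_mod x c).symm⟩
  rcases Nat.eq_zero_or_pos r with rfl | hr
  · simp only [Nat.add_zero, col, lam]
    have h3 : c * q % c = 0 := Nat.mul_mod_right c q
    have h1 : (c * q + c - 1) / c = q := by
      rw [show c * q + c - 1 = c * q + (c - 1) by omega, Nat.mul_add_div hc q (c - 1),
        Nat.div_eq_of_lt (by omega), Nat.add_zero]
    rw [h1, h3, Nat.sub_zero, Nat.mod_self, Nat.add_zero]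
  · have h1 : c * q + r + c - 1 = c * q + (c + r - 1) := by omega
    have h2 : (c * q + (c + r - 1)) / c = q + (c + r - 1) / c := Nat.mul_add_div hc q _
    have h3 : (c + r - 1) / c = 1 := by
      rw [show c + r - 1 = c * 1 + (r - 1) by omega, Nat.mul_add_div hc 1 _,
        Nat.div_eq_of_lt (by omega)]
    have h4 : (c * q + r) % c = r := by rw [Nat.mul_add_mod, Nat.mod_eq_of_lt hrc]
    have h5 : (c - r) % c = c - r := Nat.mod_eq_of_lt (by omega)
    simp only [col, lam, h1, h2, h3, h4, h5, Nat.mul_add, Nat.mul_one]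
    omega

lemma col_lam_unique {c x g m : ℕ} (hc : 0 < c) (h : x + g = c * m) (hg : g < c)
    (hgm : 0 < g → 0 < m) : col c x = g ∧ lam c x = m := by
  have hcol : col c x = g := by
    rcases Nat.eq_zero_or_pos g with rfl | hgpos
    · have hx : x = c * m := by omega
      subst hx
      simp [col, Nat.mul_mod_right]
    · have hm := hgm hgpos
      have hx : x = c * (m - 1) + (c - g) := by
        have : c * (m - 1) + c = c * m := by
          rw [← Nat.mul_succ]; congr 1; omega
        omega
      subst hx
      have h1 : (c * (m - 1) + (c - g)) % c = (c - g) % c := Nat.mul_add_mod _ _ _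
      have h2 : (c - g) % c = c - g := Nat.mod_eq_of_lt (by omega)
      simp only [col, h1, h2]
      rw [show c - (c - g) = g by omega, Nat.mod_eq_of_lt hg]
  refine ⟨hcol, ?_⟩
  have hE : c * lam c x = c * m := by rw [lam_col hc, hcol]; omega
  exact Nat.eq_of_mul_eq_mul_left hc hE

lemma lam_pos_of_col_pos {c x : ℕ} (hc : 0 < c) (h : 0 < col c x) : 0 < lam c x := by
  by_contra hh
  have h0 : lam c x = 0 := by omega
  have := lam_col hc x
  rw [h0, Nat.mul_zero] at this
  omega

lemma lam_le {c k x : ℕ} (hc : 0 < c) (hx : x ≤ c * k) : lam c x ≤ k := by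
  by_contra hh
  have h1 : c * (k + 1) ≤ c * lam c x := Nat.mul_le_mul le_rfl (by omega)
  rw [Nat.mul_succ] at h1
  have h2 := lam_col hc x
  have h3 := col_lt hc x
  omega

lemma arith {c x y a b m m' : ℕ} (E : c * m = x + a) (E' : c * m' = y + b)
    (ha : a < c) (hb : b < c) :
    (x < y ↔ (m < m' ∨ (m = m' ∧ b < a))) ∧ (x = y ↔ (m = m' ∧ a = b)) := by
  rcases Nat.lt_trichotomy m m' with h | h | h
  · have h1 : c * (m + 1) ≤ c * m' := Nat.mul_le_mul le_rfl (by omega)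
    rw [Nat.mul_succ] at h1
    have h2 : x + a + c ≤ y + b := by omega
    constructor <;> constructor <;> intro <;> omega
  · subst h
    have h2 : x + a = y + b := by omega
    constructor <;> constructor <;> intro <;> omega
  · have h1 : c * (m' + 1) ≤ c * m := Nat.mul_le_mul le_rfl (by omega)
    rw [Nat.mul_succ] at h1
    have h2 : y + b + c ≤ x + a := by omega
    constructor <;> constructor <;> intro <;> omega

/-- The descent condition on a pair of coloured letters. -/
def Dcond (a b u v : ℕ) : Prop := (a = 0 ∧ b = 0 ∧ v < u) ∨ (a = b ∧ 0 < a ∧ v ≤ u) ∨ a < b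

instance (a b u v : ℕ) : Decidable (Dcond a b u v) := by unfold Dcond; infer_instance

lemma key_iff {c x y u v : ℕ} (hc : 0 < c) (huv : u ≠ v) :
    (x < y ∨ (x = y ∧ u < v)) ↔
    (if Dcond (col c x) (col c y) u v then lam c x < lam c y else lam c x ≤ lam c y) := by
  have E := lam_col hc x
  have E' := lam_col hc y
  have ha := col_lt hc x
  have hb := col_lt hc y
  obtain ⟨h1, h2⟩ := arith E E' ha hb
  split_ifs with hD <;> unfold Dcond at hD <;> omega

lemma keylt {n x y i j : ℕ} (hi : i < n) (hj : j < n) :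
    x * n + i < y * n + j ↔ (x < y ∨ (x = y ∧ i < j)) := by
  rcases Nat.lt_trichotomy x y with h | h | h
  · have h1 : (x + 1) * n ≤ y * n := Nat.mul_le_mul (by omega) le_rfl
    rw [add_one_mul] at h1
    constructor <;> intro <;> [exact Or.inl h; omega]
  · subst h
    constructor <;> intro h2 <;> omega
  · have h1 : (y + 1) * n ≤ x * n := Nat.mul_le_mul (by omega) le_rfl
    rw [add_one_mul] at h1
    constructor <;> intro h2 <;> omega

end CPaux
namespace CPaux
open Finset Equiv

variable {n c : ℕ}

section word

lemma permLetter_zero (σ : Perm (Fin n)) : permLetter σ 0 = 0 := by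
  simp [permLetter]

lemma permLetter_succ (σ : Perm (Fin n)) (i : ℕ) (h : i < n) :
    permLetter σ (i + 1) = (σ ⟨i, h⟩ : ℕ) + 1 := by
  simp only [permLetter, Nat.add_sub_cancel]
  rw [dif_pos ⟨h, by omega⟩]

lemma wordColour_zero (γ : Fin n → Fin c) : wordColour γ 0 = 0 := by
  simp [wordColour]

lemma wordColour_succ (γ : Fin n → Fin c) (i : ℕ) (h : i < n) :
    wordColour γ (i + 1) = (γ ⟨i, h⟩ : ℕ) := by
  simp only [wordColour, Nat.add_sub_cancel]
  rw [dif_pos ⟨h, by omega⟩]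

variable (σ : Perm (Fin n)) (γ : Fin n → Fin c)

/-- notation for the descent set of the pair `(σ, γ)`. -/
def DSet : Finset ℕ := colouredDesSet n (permLetter σ) (wordColour γ)

lemma mem_DSet_iff {i : ℕ} :
    i ∈ DSet σ γ ↔ i < n ∧
      ((wordColour γ i = 0 ∧ wordColour γ (i+1) = 0 ∧ permLetter σ (i+1) < permLetter σ i) ∨
       (wordColour γ i = wordColour γ (i+1) ∧ 0 < wordColour γ i ∧
         permLetter σ (i+1) ≤ permLetter σ i) ∨
       wordColour γ i < wordColour γ (i+1)) := by
  simp [DSet, colouredDesSet, Finset.mem_filter, Finset.mem_range]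

lemma mem_DSet_zero (hn : 0 < n) : 0 ∈ DSet σ γ ↔ 0 < (γ ⟨0, hn⟩ : ℕ) := by
  rw [mem_DSet_iff, wordColour_zero, wordColour_succ γ 0 hn, permLetter_zero,
    permLetter_succ σ 0 hn]
  omega

lemma mem_DSet_succ (i : ℕ) (h : i + 1 < n) :
    (i + 1) ∈ DSet σ γ ↔
      Dcond (γ ⟨i, by omega⟩) (γ ⟨i + 1, h⟩) (σ ⟨i, by omega⟩) (σ ⟨i + 1, h⟩) := by
  rw [mem_DSet_iff, wordColour_succ γ i (by omega), wordColour_succ γ (i+1) h,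
    permLetter_succ σ i (by omega), permLetter_succ σ (i+1) h]
  unfold Dcond
  omega

lemma DSet_subset : DSet σ γ ⊆ Finset.range n := Finset.filter_subset _ _

lemma DSet_card_le : (DSet σ γ).card ≤ n := by
  have := Finset.card_le_card (DSet_subset σ γ)
  simpa using this

end word

section key

variable (hn : 0 < n)

/-- The sorting key of `f`. -/
def keyf {N : ℕ} (f : Fin n → Fin N) (j : Fin n) : ℕ := (f j : ℕ) * n + j

lemma keyf_inj {N : ℕ} (f : Fin n → Fin N) : Function.Injective (keyf f) := by
  intro i j h
  have hi : keyf f i % n = (i : ℕ) := by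
    rw [keyf, Nat.add_comm, Nat.add_mul_mod_self_right, Nat.mod_eq_of_lt i.isLt]
  have hj : keyf f j % n = (j : ℕ) := by
    rw [keyf, Nat.add_comm, Nat.add_mul_mod_self_right, Nat.mod_eq_of_lt j.isLt]
  exact Fin.ext (by rw [← hi, ← hj, h])

lemma keyf_lt_iff {N : ℕ} (f : Fin n → Fin N) (i j : Fin n) :
    keyf f i < keyf f j ↔ ((f i : ℕ) < f j ∨ ((f i : ℕ) = f j ∧ (i : ℕ) < j)) := by
  exact keylt i.isLt j.isLt

lemma sort_eq_iff {N : ℕ} (f : Fin n → Fin N) (σ : Perm (Fin n)) :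
    Tuple.sort (keyf f) = σ ↔ StrictMono (fun i => keyf f (σ i)) := by
  rw [eq_comm, Tuple.eq_sort_iff]
  constructor
  · rintro ⟨hm, -⟩
    exact hm.strictMono_of_injective ((keyf_inj f).comp σ.injective)
  · intro hs
    exact ⟨hs.monotone, fun i j hij heq =>
      absurd (σ.injective (keyf_inj f heq)) (Ne.symm (ne_of_gt hij))⟩

end key

section chain

variable (σ : Perm (Fin n)) (γ : Fin n → Fin c)

/-- `cm μ` is the 1-indexed version of the chain `μ`, with `cm μ 0 = 0`. -/
def cm (μ : Fin n → ℕ) : ℕ → ℕ := fun i =>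
  if h : i - 1 < n ∧ 1 ≤ i then μ ⟨i - 1, h.1⟩ else 0

lemma cm_zero (μ : Fin n → ℕ) : cm μ 0 = 0 := by simp [cm]

lemma cm_succ (μ : Fin n → ℕ) (i : ℕ) (h : i < n) : cm μ (i + 1) = μ ⟨i, h⟩ := by
  simp only [cm, Nat.add_sub_cancel]
  rw [dif_pos ⟨h, by omega⟩]

/-- The chain condition: weakly increasing, strict at descents. -/
def ChainCond (μ : Fin n → ℕ) : Prop :=
  ∀ i < n, if i ∈ DSet σ γ then cm μ i < cm μ (i + 1) else cm μ i ≤ cm μ (i + 1)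

instance (μ : Fin n → ℕ) : Decidable (ChainCond σ γ μ) := by
  unfold ChainCond; infer_instance

lemma cm_mono {μ : Fin n → ℕ} (hμ : ChainCond σ γ μ) :
    ∀ a b, a ≤ b → b ≤ n → cm μ a ≤ cm μ b := by
  intro a b hab hbn
  induction b generalizing a with
  | zero =>
      have ha : a = 0 := by omega
      subst ha; exact le_rfl
  | succ b ih =>
      rcases Nat.eq_or_lt_of_le hab with rfl | hlt
      · exact le_rfl
      · have h1 : cm μ a ≤ cm μ b := ih a (by omega) (by omega)
        have h2 := hμ b (by omega)
        split_ifs at h2 <;> omega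

lemma chain_pos {μ : Fin n → ℕ} (hn : 0 < n) (hμ : ChainCond σ γ μ) :
    ∀ i : Fin n, 0 < (γ i : ℕ) → 0 < μ i := by
  intro i hγ
  by_contra hh
  have hμi : μ i = 0 := by omega
  -- every value cm μ j for j ≤ i+1 is 0
  have hzero : ∀ j, j ≤ (i : ℕ) + 1 → cm μ j = 0 := by
    intro j hj
    have h1 : cm μ j ≤ cm μ ((i : ℕ) + 1) := cm_mono σ γ hμ j _ hj (by omega)
    rw [cm_succ μ i i.isLt] at h1
    simp only [Fin.eta] at h1
    omega
  -- no descents at positions ≤ i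
  have hnd : ∀ j, j ≤ (i : ℕ) → j ∉ DSet σ γ := by
    intro j hj hmem
    have h2 := hμ j (by omega)
    rw [if_pos hmem] at h2
    have h3 := hzero j (by omega)
    have h4 := hzero (j + 1) (by omega)
    omega
  -- colours are all 0 up to i
  have hcol : ∀ j (hjn : j ≤ (i : ℕ)), (γ ⟨j, by omega⟩ : ℕ) = 0 := by
    intro j
    induction j with
    | zero =>
        intro hjn
        have := hnd 0 (by omega)
        rw [mem_DSet_zero σ γ hn] at this
        omega
    | succ j ih =>
        intro hjn
        have hj1 : j + 1 < n := by omega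
        have := hnd (j + 1) hjn
        rw [mem_DSet_succ σ γ j hj1] at this
        unfold Dcond at this
        have hj0 := ih (by omega)
        omega
  have := hcol i (le_refl _)
  simp only [Fin.eta] at this
  omega

end chain

end CPaux
namespace CPaux
open Finset Equiv

variable {n c : ℕ}

section adj

lemma strictMono_of_adj {g : Fin n → ℕ}
    (h : ∀ i (hi : i + 1 < n), g ⟨i, by omega⟩ < g ⟨i + 1, hi⟩) : StrictMono g := by
  have H : ∀ b (hb : b < n) a (ha : a < b), g ⟨a, by omega⟩ < g ⟨b, hb⟩ := by
    intro b
    induction b with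
    | zero => intro _ a ha; omega
    | succ b ih =>
        intro hb a ha
        rcases Nat.eq_or_lt_of_le (Nat.lt_succ_iff.mp ha) with rfl | hlt
        · exact h a hb
        · exact (ih (by omega) a hlt).trans (h b hb)
  intro a b hab
  have := H b b.isLt a (by exact hab)
  simpa using this

lemma strictMono_gap {θ : Fin n → ℕ} (h : StrictMono θ) (a b : Fin n) (hab : a ≤ b) :
    θ a + ((b : ℕ) - a) ≤ θ b := by
  have H : ∀ m (b : Fin n), (a : ℕ) + m = b → θ a + m ≤ θ b := by
    intro m
    induction m with
    | zero =>
        intro b hb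
        have : a = b := Fin.ext (by omega)
        subst this; omega
    | succ m ih =>
        intro b hb
        have hb' : (a : ℕ) + m < n := by have := b.isLt; omega
        have h1 := ih ⟨(a : ℕ) + m, hb'⟩ rfl
        have h2 : θ ⟨(a : ℕ) + m, hb'⟩ < θ b := h (by simp [Fin.lt_def]; omega)
        omega
  have := H ((b : ℕ) - a) b (by have := Fin.le_def.mp hab; omega)
  omega

end adj

section offf

variable (σ : Perm (Fin n)) (γ : Fin n → Fin c)

/-- number of non-descents among positions `0,…,i`. -/
def off (i : ℕ) : ℕ := ((Finset.range (i + 1)).filter (fun j => j ∉ DSet σ γ)).card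

lemma off_zero : off σ γ 0 = if 0 ∈ DSet σ γ then 0 else 1 := by
  unfold off
  rw [Finset.range_one, Finset.filter_singleton]
  split_ifs with h <;> simp [h]

lemma off_succ (i : ℕ) :
    off σ γ (i + 1) = off σ γ i + (if (i + 1) ∈ DSet σ γ then 0 else 1) := by
  unfold off
  rw [Finset.range_add_one, Finset.filter_insert]
  split_ifs with h
  · simp
  · rw [Finset.card_insert_of_notMem (by simp)]

lemma off_le (i : ℕ) : off σ γ i ≤ i + 1 :=
  le_trans (Finset.card_filter_le _ _) (by simp)

lemma off_mono {a b : ℕ} (hab : a ≤ b) : off σ γ a ≤ off σ γ b :=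
  Finset.card_le_card (Finset.filter_subset_filter _ (Finset.range_subset_range.2 (by omega)))

lemma off_gap {a b : ℕ} (hab : a ≤ b) : off σ γ b ≤ off σ γ a + (b - a) := by
  induction b with
  | zero =>
      have ha : a = 0 := by omega
      subst ha; simp
  | succ b ih =>
      rcases Nat.eq_or_lt_of_le hab with rfl | hlt
      · simp
      · have := ih (by omega)
        have h2 := off_succ σ γ b
        split_ifs at h2 <;> omega

lemma off_last (hn : 0 < n) : off σ γ (n - 1) = n - (DSet σ γ).card := by
  unfold off
  rw [show n - 1 + 1 = n by omega]
  rw [Finset.filter_not, Finset.card_sdiff_of_subset (Finset.filter_subset _ _)]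
  congr 1
  · simp
  · congr 1
    rw [Finset.filter_mem_eq_inter, Finset.inter_eq_right]
    exact DSet_subset σ γ

end offf

section equivB

variable (σ : Perm (Fin n)) (γ : Fin n → Fin c) (k : ℕ)

/-- chains compatible with `(σ, γ)`, bounded by `k`. -/
def ChainT : Type := {μ : Fin n → ℕ // (∀ i, μ i ≤ k) ∧ ChainCond σ γ μ}

/-- strictly increasing sequences in `[1, k + n - d]`. -/
def ThetaT : Type :=
  {θ : Fin n → ℕ // StrictMono θ ∧
    ∀ i : Fin n, θ i ∈ Finset.Icc 1 (k + (n - (DSet σ γ).card))}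

lemma theta_ge_off {θ : Fin n → ℕ} (hθ : StrictMono θ) (h1 : ∀ i, 1 ≤ θ i) (i : Fin n) :
    off σ γ (i : ℕ) ≤ θ i := by
  have h2 := strictMono_gap hθ ⟨0, i.pos⟩ i (by simp [Fin.le_def])
  have h3 := h1 (⟨0, i.pos⟩ : Fin n)
  have h4 := off_le σ γ (i : ℕ)
  simp only [Fin.val_mk] at h2
  omega

lemma B1 (hn : 0 < n) {μ : Fin n → ℕ} (hμk : ∀ i, μ i ≤ k) (hμ : ChainCond σ γ μ) :
    StrictMono (fun i : Fin n => μ i + off σ γ (i : ℕ)) ∧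
    ∀ i : Fin n, μ i + off σ γ (i : ℕ) ∈ Finset.Icc 1 (k + (n - (DSet σ γ).card)) := by
  constructor
  · apply strictMono_of_adj
    intro i hi
    have h2 := hμ (i + 1) hi
    rw [cm_succ μ i (by omega), cm_succ μ (i + 1) hi] at h2
    have h3 := off_succ σ γ i
    simp only [Fin.val_mk]
    split_ifs at h2 h3 <;> omega
  · intro i
    rw [Finset.mem_Icc]
    constructor
    · by_cases h0 : 0 ∈ DSet σ γ
      · have h2 := hμ 0 hn
        rw [if_pos h0, cm_zero, cm_succ μ 0 hn] at h2
        have h3 : cm μ 1 ≤ cm μ ((i : ℕ) + 1) := cm_mono σ γ hμ 1 _ (by omega) (by omega)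
        rw [cm_succ μ 0 hn, cm_succ μ (i : ℕ) i.isLt] at h3
        simp only [Fin.eta] at h3
        omega
      · have h2 := off_mono σ γ (Nat.zero_le (i : ℕ))
        rw [off_zero, if_neg h0] at h2
        omega
    · have h2 : off σ γ (i : ℕ) ≤ off σ γ (n - 1) := off_mono σ γ (by have := i.isLt; omega)
      rw [off_last σ γ hn] at h2
      have := hμk i
      omega

lemma B2 (hn : 0 < n) {θ : Fin n → ℕ} (hθ : StrictMono θ)
    (hθm : ∀ i : Fin n, θ i ∈ Finset.Icc 1 (k + (n - (DSet σ γ).card))) :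
    (∀ i : Fin n, θ i - off σ γ (i : ℕ) ≤ k) ∧
    ChainCond σ γ (fun i => θ i - off σ γ (i : ℕ)) := by
  have hb : ∀ i : Fin n, 1 ≤ θ i ∧ θ i ≤ k + (n - (DSet σ γ).card) := by
    intro i; have := hθm i; rw [Finset.mem_Icc] at this; exact this
  have hoff : ∀ i : Fin n, off σ γ (i : ℕ) ≤ θ i :=
    theta_ge_off σ γ hθ (fun i => (hb i).1)
  have hd : (DSet σ γ).card ≤ n := DSet_card_le σ γ
  constructor
  · intro i
    have h1 := strictMono_gap hθ i ⟨n - 1, by omega⟩ (by simp [Fin.le_def]; have := i.isLt; omega)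
    have h2 := (hb ⟨n - 1, by omega⟩).2
    have h3 := off_gap σ γ (show (i : ℕ) ≤ n - 1 by have := i.isLt; omega)
    have h4 := off_last σ γ hn
    simp only [Fin.val_mk] at h1 h2
    have h5 := hoff i
    omega
  · intro i hi
    rcases i with _ | i
    · rw [cm_zero, cm_succ _ 0 hn]
      have h1 := (hb ⟨0, hn⟩).1
      have h2 := off_zero σ γ
      split_ifs with h0
      · rw [h2, if_pos h0]; omega
      · omega
    · have hi1 : i < n := by omega
      rw [cm_succ _ i hi1, cm_succ _ (i + 1) hi]
      have h1 : θ ⟨i, hi1⟩ < θ ⟨i + 1, hi⟩ := hθ (by simp [Fin.lt_def])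
      have h2 := off_succ σ γ i
      have h3 := hoff ⟨i, hi1⟩
      simp only [Fin.val_mk] at h3 ⊢
      split_ifs at h2 ⊢ <;> omega

/-- chains are equinumerous with strictly increasing sequences. -/
noncomputable def equivB (hn : 0 < n) : ChainT σ γ k ≃ ThetaT σ γ k where
  toFun m := ⟨fun i => m.1 i + off σ γ (i : ℕ),
    (B1 σ γ k hn m.2.1 m.2.2).1, (B1 σ γ k hn m.2.1 m.2.2).2⟩
  invFun t := ⟨fun i => t.1 i - off σ γ (i : ℕ),
    (B2 σ γ k hn t.2.1 t.2.2).1, (B2 σ γ k hn t.2.1 t.2.2).2⟩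
  left_inv m := Subtype.ext (funext fun i => by simp)
  right_inv t := Subtype.ext (funext fun i => by
    have := theta_ge_off σ γ t.2.1 (fun j => (Finset.mem_Icc.mp (t.2.2 j)).1) i
    simp only
    omega)

/-- strictly increasing sequences correspond to `n`-subsets. -/
noncomputable def equivC :
    ThetaT σ γ k ≃
      {s : Finset ℕ // s ∈ (Finset.Icc 1 (k + (n - (DSet σ γ).card))).powersetCard n} where
  toFun t := ⟨Finset.image t.1 Finset.univ, by
    rw [Finset.mem_powersetCard]
    refine ⟨fun x hx => ?_, ?_⟩
    · obtain ⟨i, -, rfl⟩ := Finset.mem_image.mp hx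
      exact t.2.2 i
    · rw [Finset.card_image_of_injective _ t.2.1.injective]
      simp⟩
  invFun s := ⟨fun i => s.1.orderEmbOfFin (Finset.mem_powersetCard.mp s.2).2 i,
    (s.1.orderEmbOfFin _).strictMono, fun i =>
      (Finset.mem_powersetCard.mp s.2).1 (Finset.orderEmbOfFin_mem _ _ i)⟩
  left_inv t := Subtype.ext (funext fun i => by
    have h : t.1 = (Finset.image t.1 Finset.univ).orderEmbOfFin
        (by rw [Finset.card_image_of_injective _ t.2.1.injective]; simp) :=
      Finset.orderEmbOfFin_unique _ (fun x => Finset.mem_image_of_mem _ (Finset.mem_univ x))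
        t.2.1
    exact (congrFun h.symm i))
  right_inv s := Subtype.ext (by
    apply Finset.eq_of_subset_of_card_le
    · intro x hx
      obtain ⟨i, -, rfl⟩ := Finset.mem_image.mp hx
      exact Finset.orderEmbOfFin_mem _ _ i
    · rw [Finset.card_image_of_injective _ (Finset.orderEmbOfFin _ _).strictMono.injective]
      simp [(Finset.mem_powersetCard.mp s.2).2])

lemma card_chainT (hn : 0 < n) :
    Nat.card (ChainT σ γ k) = (n + k - (DSet σ γ).card).choose n := by
  rw [Nat.card_congr ((equivB σ γ k hn).trans (equivC σ γ k))]
  rw [Nat.card_eq_fintype_card, Fintype.card_coe, Finset.card_powersetCard, Nat.card_Icc]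
  have hd : (DSet σ γ).card ≤ n := DSet_card_le σ γ
  congr 1
  omega

end equivB

end CPaux
namespace CPaux
open Finset Equiv

variable {n c k : ℕ}

section fiber

variable (σ : Perm (Fin n)) (γ : Fin n → Fin c)

/-- The sorting map: sort by the key, read off colours. -/
noncomputable def phi (hc : 0 < c) (f : Fin n → Fin (c * k + 1)) :
    Perm (Fin n) × (Fin n → Fin c) :=
  (Tuple.sort (keyf f), fun i => ⟨col c (f (Tuple.sort (keyf f) i) : ℕ), col_lt hc _⟩)

lemma phi_eq_iff (hc : 0 < c) (f : Fin n → Fin (c * k + 1)) :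
    phi hc f = (σ, γ) ↔
      (StrictMono (fun i => keyf f (σ i)) ∧
       ∀ i : Fin n, col c (f (σ i) : ℕ) = (γ i : ℕ)) := by
  rw [phi, Prod.mk.injEq]
  constructor
  · rintro ⟨h1, h2⟩
    refine ⟨(sort_eq_iff f σ).mp h1, fun i => ?_⟩
    have h3 := congrArg Fin.val (congrFun h2 i)
    simp only [Fin.val_mk] at h3
    rw [h1] at h3
    exact h3
  · rintro ⟨h1, h2⟩
    have hs : Tuple.sort (keyf f) = σ := (sort_eq_iff f σ).mpr h1
    refine ⟨hs, funext fun i => Fin.ext ?_⟩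
    simp only [hs]
    exact h2 i

lemma adj_iff (hc : 0 < c) {f : Fin n → Fin (c * k + 1)}
    (hcol : ∀ i : Fin n, col c (f (σ i) : ℕ) = (γ i : ℕ)) (i : ℕ) (hi : i + 1 < n) :
    keyf f (σ ⟨i, by omega⟩) < keyf f (σ ⟨i + 1, hi⟩) ↔
      (if (i + 1) ∈ DSet σ γ
       then lam c (f (σ ⟨i, by omega⟩) : ℕ) < lam c (f (σ ⟨i + 1, hi⟩) : ℕ)
       else lam c (f (σ ⟨i, by omega⟩) : ℕ) ≤ lam c (f (σ ⟨i + 1, hi⟩) : ℕ)) := by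
  have hin : i < n := by omega
  have hab : (⟨i, hin⟩ : Fin n) ≠ ⟨i + 1, hi⟩ := by
    intro h; exact absurd (congrArg Fin.val h) (by simp)
  have huv : (σ ⟨i, hin⟩ : ℕ) ≠ (σ ⟨i + 1, hi⟩ : ℕ) :=
    fun h => absurd (σ.injective (Fin.ext h)) hab
  have hk := key_iff (c := c) (x := (f (σ ⟨i, hin⟩) : ℕ)) (y := (f (σ ⟨i + 1, hi⟩) : ℕ)) hc huv
  rw [hcol ⟨i, hin⟩, hcol ⟨i + 1, hi⟩] at hk
  rw [keyf_lt_iff]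
  simp only [mem_DSet_succ σ γ i hi]
  exact hk

lemma A1 (hn : 0 < n) (hc : 0 < c) {f : Fin n → Fin (c * k + 1)}
    (hsm : StrictMono (fun i => keyf f (σ i)))
    (hcol : ∀ i : Fin n, col c (f (σ i) : ℕ) = (γ i : ℕ)) :
    (∀ i : Fin n, lam c (f (σ i) : ℕ) ≤ k) ∧
    ChainCond σ γ (fun i => lam c (f (σ i) : ℕ)) := by
  constructor
  · intro i
    exact lam_le hc (Nat.lt_succ_iff.mp (f (σ i)).isLt)
  · intro i hi
    rcases i with _ | i
    · rw [cm_zero, cm_succ _ 0 hn]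
      split_ifs with h0
      · rw [mem_DSet_zero σ γ hn] at h0
        have := hcol ⟨0, hn⟩
        exact lam_pos_of_col_pos hc (by omega)
      · exact Nat.zero_le _
    · have hin : i < n := by omega
      rw [cm_succ _ i hin, cm_succ _ (i + 1) hi]
      have h1 : keyf f (σ ⟨i, by omega⟩) < keyf f (σ ⟨i + 1, hi⟩) :=
        hsm (show (⟨i, hin⟩ : Fin n) < ⟨i + 1, hi⟩ by simp [Fin.lt_def])
      have h2 := (adj_iff σ γ hc hcol i hi).mp h1
      split_ifs at h2 ⊢ <;> [exact h2; exact h2]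

lemma A2 (hn : 0 < n) (hc : 0 < c) {μ : Fin n → ℕ} (hμk : ∀ i, μ i ≤ k)
    (hμ : ChainCond σ γ μ) :
    (∀ j : Fin n, c * μ (σ.symm j) - (γ (σ.symm j) : ℕ) ≤ c * k) ∧
    (∀ i : Fin n, col c (c * μ i - (γ i : ℕ)) = (γ i : ℕ) ∧
      lam c (c * μ i - (γ i : ℕ)) = μ i) := by
  have pos := chain_pos σ γ hn hμ
  constructor
  · intro j
    have h1 : c * μ (σ.symm j) ≤ c * k := Nat.mul_le_mul le_rfl (hμk _)
    omega
  · intro i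
    have hγc : (γ i : ℕ) < c := (γ i).isLt
    have hle : (γ i : ℕ) ≤ c * μ i := by
      rcases Nat.eq_zero_or_pos (γ i : ℕ) with h0 | hpos
      · omega
      · have h1 : c ≤ c * μ i := Nat.le_mul_of_pos_right c (pos i hpos)
        omega
    have hx : (c * μ i - (γ i : ℕ)) + (γ i : ℕ) = c * μ i := Nat.sub_add_cancel hle
    exact col_lam_unique hc hx hγc (fun h => pos i h)

lemma A3 (hc : 0 < c) {f : Fin n → Fin (c * k + 1)} {μ : Fin n → ℕ}
    (hcol : ∀ i : Fin n, col c (f (σ i) : ℕ) = (γ i : ℕ))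
    (hlam : ∀ i : Fin n, lam c (f (σ i) : ℕ) = μ i)
    (hμ : ChainCond σ γ μ) : StrictMono (fun i => keyf f (σ i)) := by
  apply strictMono_of_adj
  intro i hi
  have hin : i < n := by omega
  apply (adj_iff σ γ hc hcol i hi).mpr
  rw [hlam ⟨i, hin⟩, hlam ⟨i + 1, hi⟩]
  have h2 := hμ (i + 1) hi
  rw [cm_succ _ i hin, cm_succ _ (i + 1) hi] at h2
  split_ifs at h2 ⊢ <;> [exact h2; exact h2]

/-- The fiber of `phi` over `(σ, γ)` is equinumerous with the set of compatible chains. -/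
noncomputable def equivA (hn : 0 < n) (hc : 0 < c) :
    {f : Fin n → Fin (c * k + 1) //
      StrictMono (fun i => keyf f (σ i)) ∧
      ∀ i : Fin n, col c (f (σ i) : ℕ) = (γ i : ℕ)} ≃ ChainT σ γ k where
  toFun f := ⟨fun i => lam c (f.1 (σ i) : ℕ),
    (A1 σ γ hn hc f.2.1 f.2.2).1, (A1 σ γ hn hc f.2.1 f.2.2).2⟩
  invFun m := ⟨fun j => ⟨c * m.1 (σ.symm j) - (γ (σ.symm j) : ℕ), by
      have := (A2 σ γ hn hc m.2.1 m.2.2).1 j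
      omega⟩,
    by
      have hprop := (A2 σ γ hn hc m.2.1 m.2.2).2
      have hcol : ∀ i : Fin n,
          col c ((c * m.1 (σ.symm (σ i)) - (γ (σ.symm (σ i)) : ℕ) : ℕ)) = (γ i : ℕ) := by
        intro i; rw [σ.symm_apply_apply]; exact (hprop i).1
      have hlam : ∀ i : Fin n,
          lam c ((c * m.1 (σ.symm (σ i)) - (γ (σ.symm (σ i)) : ℕ) : ℕ)) = m.1 i := by
        intro i; rw [σ.symm_apply_apply]; exact (hprop i).2
      exact ⟨A3 σ γ hc hcol hlam m.2.2, hcol⟩⟩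
  left_inv f := Subtype.ext (funext fun j => Fin.ext (by
    simp only [σ.symm_apply_apply, σ.apply_symm_apply]
    have hc' : 0 < c := by
      rcases Nat.eq_zero_or_pos c with h | h
      · exact absurd ((γ (σ.symm j)).isLt) (by omega)
      · exact h
    have h1 := lam_col hc' (f.1 j : ℕ)
    have h2 := f.2.2 (σ.symm j)
    rw [σ.apply_symm_apply] at h2
    omega))
  right_inv m := Subtype.ext (funext fun i => by
    have hc' : 0 < c := (γ i).pos
    have hprop := (A2 σ γ hn hc' m.2.1 m.2.2).2
    simp only [σ.symm_apply_apply]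
    exact (hprop i).2)

lemma fiber_card (hn : 0 < n) (hc : 0 < c) :
    Nat.card {f : Fin n → Fin (c * k + 1) // phi hc f = (σ, γ)} =
      (n + k - (DSet σ γ).card).choose n := by
  rw [Nat.card_congr (((Equiv.subtypeEquivRight (fun f => phi_eq_iff σ γ hc f)).trans
    (equivA σ γ hn hc)))]
  exact card_chainT σ γ k hn

end fiber

lemma count (hn : 0 < n) (hc : 0 < c) (k : ℕ) :
    ∑ p : Perm (Fin n) × (Fin n → Fin c),
      (n + k - (DSet p.1 p.2).card).choose n = (c * k + 1) ^ n := by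
  classical
  have h0 : ∀ p : Perm (Fin n) × (Fin n → Fin c),
      (n + k - (DSet p.1 p.2).card).choose n =
        Nat.card {f : Fin n → Fin (c * k + 1) // phi hc f = p} := by
    rintro ⟨σ, γ⟩
    exact (fiber_card σ γ hn hc).symm
  rw [Finset.sum_congr rfl (fun p _ => h0 p)]
  have h1 : ∀ p : Perm (Fin n) × (Fin n → Fin c),
      Nat.card {f : Fin n → Fin (c * k + 1) // phi hc f = p} =
        Fintype.card {f : Fin n → Fin (c * k + 1) // phi hc f = p} := by
    intro p; exact Nat.card_eq_fintype_card
  rw [Finset.sum_congr rfl (fun p _ => h1 p), ← Fintype.card_sigma,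
    Fintype.card_congr (Equiv.sigmaFiberEquiv (phi (k := k) hc))]
  simp [Fintype.card_fun]

end CPaux
/-- For the coloured permutation group `S_n^c = ℤ/cℤ ≀ S_n`, as formal power series
over `ℚ`: `∑_{w ∈ S_n^c} t^{des w} / (1-t)^{n+1} = ∑_{k≥0} (ck+1)^n t^k`, i.e. the
descent polynomial of `S_n^c` is the `h^*`-polynomial of the cube `[0,c]^n`. -/
theorem coloured_perms_hstar_cube (n c : ℕ) (hn : 0 < n) (hc : 0 < c) :
    (∑ p : Equiv.Perm (Fin n) × (Fin n → Fin c),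
        (PowerSeries.X : PowerSeries ℚ) ^
          (colouredDesSet n (permLetter p.1) (wordColour p.2)).card)
      * ((1 - PowerSeries.X) ^ (n + 1))⁻¹
      = PowerSeries.mk (fun k => (((c * k + 1 : ℕ) ^ n : ℕ) : ℚ)) := by
  classical
  have hinv : ((1 - PowerSeries.X : PowerSeries ℚ) ^ (n + 1))⁻¹ =
      PowerSeries.mk (fun j => ((n + j).choose n : ℚ)) := by
    rw [PowerSeries.inv_eq_iff_mul_eq_one]
    · exact PowerSeries.mk_add_choose_mul_one_sub_pow_eq_one ℚ n
    · simp
  rw [hinv, Finset.sum_mul]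
  ext j
  rw [PowerSeries.coeff_mk, map_sum]
  have hterm : ∀ p : Equiv.Perm (Fin n) × (Fin n → Fin c),
      (PowerSeries.coeff j)
          ((PowerSeries.X : PowerSeries ℚ) ^
              (colouredDesSet n (permLetter p.1) (wordColour p.2)).card *
            PowerSeries.mk (fun j => ((n + j).choose n : ℚ))) =
        (((n + j - (CPaux.DSet p.1 p.2).card).choose n : ℕ) : ℚ) := by
    intro p
    rw [PowerSeries.coeff_X_pow_mul', PowerSeries.coeff_mk]
    have hD : (colouredDesSet n (permLetter p.1) (wordColour p.2)).card =
        (CPaux.DSet p.1 p.2).card := rfl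
    rw [hD]
    split_ifs with h
    · norm_cast
      congr 1
      omega
    · rw [Nat.choose_eq_zero_of_lt (by omega)]
      norm_cast
  rw [Finset.sum_congr rfl (fun p _ => hterm p), ← Nat.cast_sum]
  exact_mod_cast congrArg (Nat.cast : ℕ → ℚ) (CPaux.count hn hc j)
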